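/- For every commutative ring k and every k-valued measure μ on the class of permutations, μ vanishes on the embedding of the subpermutation on {1,3,4} into the permutation 1342 (the four-element permutation with orders 1<2<3<4 and 1≺3≺4≺2); that is, μ of this inclusion equals 0. -/

import Mathlib

/-- A permutation: a finite set equipped with two linear orders. -/
structure Perm2 : Type 1 where
  A : Type
  fin : Fintype A
  ord1 : LinearOrder A
  ord2 : LinearOrder A

attribute [instance] Perm2.fin

/-- The first order. -/
def Perm2.lt1 (X : Perm2) (a b : X.A) : Prop := X.ord1.lt a b
/-- The second order. -/
def Perm2.lt2 (X : Perm2) (a b : X.A) : Prop := X.ord2.lt a b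

/-- An embedding of permutations: an injective map preserving both orders. -/
structure Emb (X Y : Perm2) where
  f : X.A → Y.A
  inj : Function.Injective f
  mono1 : ∀ a b : X.A, X.lt1 a b → Y.lt1 (f a) (f b)
  mono2 : ∀ a b : X.A, X.lt2 a b → Y.lt2 (f a) (f b)

/-- Composition of embeddings. -/
def Emb.comp {X Y Z : Perm2} (j : Emb Y Z) (i : Emb X Y) : Emb X Z where
  f := j.f ∘ i.f
  inj := j.inj.comp i.inj
  mono1 := fun a b h => j.mono1 _ _ (i.mono1 a b h)
  mono2 := fun a b h => j.mono2 _ _ (i.mono2 a b h)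

/-- An amalgamation of the embeddings `i : Y → X` and `j : Y → Y'`. -/
structure Amalg {Y X Y' : Perm2} (i : Emb Y X) (j : Emb Y Y') : Type 1 where
  Z : Perm2
  i' : Emb Y' Z
  j' : Emb X Z
  comm : ∀ a : Y.A, i'.f (j.f a) = j'.f (i.f a)
  cover : ∀ z : Z.A, (∃ a, i'.f a = z) ∨ (∃ b, j'.f b = z)

/-- Isomorphism of amalgamations. -/
def AmalgIso {Y X Y' : Perm2} {i : Emb Y X} {j : Emb Y Y'} (A B : Amalg i j) : Prop :=
  ∃ e : Emb A.Z B.Z, Function.Surjective e.f ∧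
    (∀ a, e.f (A.i'.f a) = B.i'.f a) ∧ (∀ b, e.f (A.j'.f b) = B.j'.f b)

/-- A measure on the class of permutations valued in a commutative ring `k`. -/
structure PMeasure (k : Type) [CommRing k] : Type 1 where
  μ : ∀ {X Y : Perm2}, Emb X Y → k
  iso_invariant : ∀ {X Y X' Y' : Perm2} (i : Emb X Y) (i' : Emb X' Y')
    (u : Emb X X') (v : Emb Y Y'), Function.Surjective u.f → Function.Surjective v.f →
    (∀ a, v.f (i.f a) = i'.f (u.f a)) → μ i = μ i'
  iso_one : ∀ {X Y : Perm2} (i : Emb X Y), Function.Surjective i.f → μ i = 1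
  comp_mul : ∀ {X Y Z : Perm2} (i : Emb X Y) (j : Emb Y Z), μ (j.comp i) = μ j * μ i
  amalg_sum : ∀ {Y X Y' : Perm2} (i : Emb Y X) (j : Emb Y Y') (n : ℕ)
    (r : Fin n → Amalg i j), (∀ A : Amalg i j, ∃! α : Fin n, AmalgIso (r α) A) →
    μ i = ∑ α : Fin n, μ (r α).i'

/-- The permutation denoted by a sequence of distinct natural numbers: the underlying
set consists of the listed numbers, the first order is the numerical one, and the second
order is the order of appearance in the sequence. -/
def listPerm (l : List ℕ) : Perm2 where
  A := {n : ℕ // n ∈ l.toFinset}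
  fin := by infer_instance
  ord1 := LinearOrder.lift' (fun x => x.val) Subtype.val_injective
  ord2 := LinearOrder.lift' (fun x => l.idxOf x.val)
    (fun a b h => Subtype.ext ((List.idxOf_inj (List.mem_toFinset.mp a.2)).mp h))

/-- The subpermutation of `X` on a subset `S`, with the induced orders. -/
noncomputable def subPerm (X : Perm2) (S : Set X.A) : Perm2 where
  A := S
  fin := S.toFinite.fintype
  ord1 := @LinearOrder.lift' _ _ X.ord1 (fun x => x.val) Subtype.val_injective
  ord2 := @LinearOrder.lift' _ _ X.ord2 (fun x => x.val) Subtype.val_injective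

/-- The inclusion of a subpermutation. -/
noncomputable def subEmb (X : Perm2) (S : Set X.A) : Emb (subPerm X S) X where
  f := Subtype.val
  inj := Subtype.val_injective
  mono1 := fun _ _ h => h
  mono2 := fun _ _ h => h

-- experiments
theorem listPerm_lt1 {l : List ℕ} {a b : (listPerm l).A} :
    (listPerm l).lt1 a b ↔ a.val < b.val := Iff.rfl

theorem listPerm_lt2 {l : List ℕ} {a b : (listPerm l).A} :
    (listPerm l).lt2 a b ↔ l.idxOf a.val < l.idxOf b.val := Iff.rfl

instance {l : List ℕ} (a b : (listPerm l).A) : Decidable ((listPerm l).lt1 a b) :=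
  decidable_of_iff _ listPerm_lt1.symm

instance {l : List ℕ} (a b : (listPerm l).A) : Decidable ((listPerm l).lt2 a b) :=
  decidable_of_iff _ listPerm_lt2.symm

example : (listPerm [1,3,4,2]).lt2 ⟨1, by decide⟩ ⟨2, by decide⟩ := listPerm_lt2.mpr (by decide)

theorem Perm2.lt1_trans (Z : Perm2) {a b c : Z.A} (h : Z.lt1 a b) (h' : Z.lt1 b c) : Z.lt1 a c := by
  letI := Z.ord1; exact lt_trans h h'

theorem Perm2.lt2_trans (Z : Perm2) {a b c : Z.A} (h : Z.lt2 a b) (h' : Z.lt2 b c) : Z.lt2 a c := by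
  letI := Z.ord2; exact lt_trans h h'

theorem Perm2.lt1_irrefl (Z : Perm2) {a : Z.A} (h : Z.lt1 a a) : False := by
  letI := Z.ord1; exact lt_irrefl _ h

theorem Perm2.lt2_irrefl (Z : Perm2) {a : Z.A} (h : Z.lt2 a a) : False := by
  letI := Z.ord2; exact lt_irrefl _ h

theorem Perm2.lt1_tricho (Z : Perm2) (a b : Z.A) : Z.lt1 a b ∨ a = b ∨ Z.lt1 b a := by
  letI := Z.ord1; exact lt_trichotomy a b

instance listPermDecEq {l : List ℕ} : DecidableEq (listPerm l).A :=
  fun a b => decidable_of_iff (a.val = b.val) Subtype.ext_iff.symm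

theorem mem_listPerm {l : List ℕ} (a : (listPerm l).A) : a.val ∈ l := List.mem_toFinset.mp a.2

/-- Build an embedding between two `listPerm`s from a value map. -/
def mkEmb (l m : List ℕ) (φ : ℕ → ℕ)
    (hmem : ∀ v ∈ l, φ v ∈ m.toFinset)
    (h1 : ∀ a ∈ l, ∀ b ∈ l, a < b → φ a < φ b)
    (h2 : ∀ a ∈ l, ∀ b ∈ l, l.idxOf a < l.idxOf b → m.idxOf (φ a) < m.idxOf (φ b)) :
    Emb (listPerm l) (listPerm m) where
  f a := ⟨φ a.val, hmem a.val (mem_listPerm a)⟩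
  inj := by
    intro a b h
    have h' : φ a.val = φ b.val := congrArg Subtype.val h
    rcases Nat.lt_trichotomy a.val b.val with hlt | heq | hgt
    · exact absurd h' (Nat.ne_of_lt (h1 _ (mem_listPerm a) _ (mem_listPerm b) hlt))
    · exact Subtype.ext heq
    · exact absurd h'.symm (Nat.ne_of_lt (h1 _ (mem_listPerm b) _ (mem_listPerm a) hgt))
  mono1 := fun a b h =>
    listPerm_lt1.mpr (h1 _ (mem_listPerm a) _ (mem_listPerm b) (listPerm_lt1.mp h))
  mono2 := fun a b h =>
    listPerm_lt2.mpr (h2 _ (mem_listPerm a) _ (mem_listPerm b) (listPerm_lt2.mp h))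

abbrev XP : Perm2 := listPerm [1,3,4,2]
def SY : Set XP.A := {a | a.val ∈ ({1,3,4} : Set ℕ)}
noncomputable def YP := subPerm XP SY
noncomputable def iY : Emb YP XP := subEmb XP SY

theorem mem_SY (a : YP.A) : a.val.val = 1 ∨ a.val.val = 3 ∨ a.val.val = 4 := a.2

theorem Ylt1 {a b : YP.A} : YP.lt1 a b ↔ a.val.val < b.val.val := Iff.rfl
theorem Ylt2 {a b : YP.A} :
    YP.lt2 a b ↔ [1,3,4,2].idxOf a.val.val < [1,3,4,2].idxOf b.val.val := Iff.rfl

/-- Build an embedding from `YP` into a `listPerm` from a value map. -/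
def mkEmbY (mm : List ℕ) (φ : ℕ → ℕ)
    (hmem : ∀ v ∈ ([1,3,4] : List ℕ), φ v ∈ mm.toFinset)
    (h1 : ∀ a ∈ ([1,3,4] : List ℕ), ∀ b ∈ ([1,3,4] : List ℕ), a < b → φ a < φ b)
    (h2 : ∀ a ∈ ([1,3,4] : List ℕ), ∀ b ∈ ([1,3,4] : List ℕ),
      [1,3,4,2].idxOf a < [1,3,4,2].idxOf b → mm.idxOf (φ a) < mm.idxOf (φ b)) :
    Emb YP (listPerm mm) where
  f a := ⟨φ a.val.val, hmem a.val.val (by rcases mem_SY a with h | h | h <;> simp [h])⟩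
  inj := by
    intro a b h
    have h' : φ a.val.val = φ b.val.val := congrArg Subtype.val h
    have ma : a.val.val ∈ ([1,3,4] : List ℕ) := by rcases mem_SY a with h | h | h <;> simp [h]
    have mb : b.val.val ∈ ([1,3,4] : List ℕ) := by rcases mem_SY b with h | h | h <;> simp [h]
    rcases Nat.lt_trichotomy a.val.val b.val.val with hlt | heq | hgt
    · exact absurd h' (Nat.ne_of_lt (h1 _ ma _ mb hlt))
    · exact Subtype.ext (Subtype.ext heq)
    · exact absurd h'.symm (Nat.ne_of_lt (h1 _ mb _ ma hgt))
  mono1 := by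
    intro a b h
    have ma : a.val.val ∈ ([1,3,4] : List ℕ) := by rcases mem_SY a with h | h | h <;> simp [h]
    have mb : b.val.val ∈ ([1,3,4] : List ℕ) := by rcases mem_SY b with h | h | h <;> simp [h]
    exact listPerm_lt1.mpr (h1 _ ma _ mb (Ylt1.mp h))
  mono2 := by
    intro a b h
    have ma : a.val.val ∈ ([1,3,4] : List ℕ) := by rcases mem_SY a with h | h | h <;> simp [h]
    have mb : b.val.val ∈ ([1,3,4] : List ℕ) := by rcases mem_SY b with h | h | h <;> simp [h]
    exact listPerm_lt2.mpr (h2 _ ma _ mb (Ylt2.mp h))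

-- the concrete embeddings
def j1 : Emb YP (listPerm [0,1,3,4]) := mkEmbY _ id (by decide) (by decide) (by decide)
def j2 : Emb YP (listPerm [10,20,30,40]) := mkEmbY _ (10 * ·) (by decide) (by decide) (by decide)
def j3 : Emb YP (listPerm [10,30,35,40]) := mkEmbY _ (10 * ·) (by decide) (by decide) (by decide)

def i1' : Emb (listPerm [0,1,3,4]) (listPerm [0,1,3,4,2]) :=
  mkEmb _ _ id (by decide) (by decide) (by decide)
def j1' : Emb (listPerm [1,3,4,2]) (listPerm [0,1,3,4,2]) :=
  mkEmb _ _ id (by decide) (by decide) (by decide)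

def i2a' : Emb (listPerm [10,20,30,40]) (listPerm [10,20,30,40,15]) :=
  mkEmb _ _ id (by decide) (by decide) (by decide)
def j2a' : Emb (listPerm [1,3,4,2]) (listPerm [10,20,30,40,15]) :=
  mkEmb _ _ (fun v => if v = 2 then 15 else 10 * v) (by decide) (by decide) (by decide)
def i2b' : Emb (listPerm [10,20,30,40]) (listPerm [10,20,30,40,25]) :=
  mkEmb _ _ id (by decide) (by decide) (by decide)
def j2b' : Emb (listPerm [1,3,4,2]) (listPerm [10,20,30,40,25]) :=
  mkEmb _ _ (fun v => if v = 2 then 25 else 10 * v) (by decide) (by decide) (by decide)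

def i3' : Emb (listPerm [10,30,35,40]) (listPerm [10,30,35,40,20]) :=
  mkEmb _ _ id (by decide) (by decide) (by decide)
def j3' : Emb (listPerm [1,3,4,2]) (listPerm [10,30,35,40,20]) :=
  mkEmb _ _ (10 * ·) (by decide) (by decide) (by decide)

-- iso-invariance comparison embeddings
def ub : Emb (listPerm [10,20,30,40]) (listPerm [0,1,3,4]) :=
  mkEmb _ _ (fun v => if v = 10 then 0 else if v = 20 then 1 else if v = 30 then 3 else 4)
    (by decide) (by decide) (by decide)
def vb : Emb (listPerm [10,20,30,40,25]) (listPerm [0,1,3,4,2]) :=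
  mkEmb _ _ (fun v => if v = 10 then 0 else if v = 20 then 1 else if v = 25 then 2 else
    if v = 30 then 3 else 4) (by decide) (by decide) (by decide)
def ua : Emb (listPerm [10,20,30,40]) (listPerm [10,30,35,40]) :=
  mkEmb _ _ (fun v => if v = 10 then 10 else if v = 20 then 30 else if v = 30 then 35 else 40)
    (by decide) (by decide) (by decide)
def va : Emb (listPerm [10,20,30,40,15]) (listPerm [10,30,35,40,20]) :=
  mkEmb _ _ (fun v => if v = 15 then 20 else if v = 10 then 10 else if v = 20 then 30 else
    if v = 30 then 35 else 40) (by decide) (by decide) (by decide)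

example : Function.Surjective ub.f := by decide
example : Function.Surjective vb.f := by decide
example : ∀ a, vb.f (i2b'.f a) = i1'.f (ub.f a) := by decide
example : Function.Surjective ua.f := by decide
example : Function.Surjective va.f := by decide
example : ∀ a, va.f (i2a'.f a) = i3'.f (ua.f a) := by decide

/-- Build an embedding of a `listPerm` into an abstract permutation. -/
def mkEmbAbs (l : List ℕ) (W : Perm2) (E : ℕ → W.A)
    (h1 : ∀ a ∈ l, ∀ b ∈ l, a < b → W.lt1 (E a) (E b))
    (h2 : ∀ a ∈ l, ∀ b ∈ l, l.idxOf a < l.idxOf b → W.lt2 (E a) (E b)) :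
    Emb (listPerm l) W where
  f a := E a.val
  inj := by
    intro a b h
    have h' : E a.val = E b.val := h
    rcases Nat.lt_trichotomy a.val b.val with hlt | heq | hgt
    · exact absurd (h' ▸ h1 _ (mem_listPerm a) _ (mem_listPerm b) hlt)
        (fun hh => W.lt1_irrefl hh)
    · exact Subtype.ext heq
    · exact absurd (h' ▸ h1 _ (mem_listPerm b) _ (mem_listPerm a) hgt)
        (fun hh => W.lt1_irrefl hh)
  mono1 := fun a b h => h1 _ (mem_listPerm a) _ (mem_listPerm b) (listPerm_lt1.mp h)
  mono2 := fun a b h => h2 _ (mem_listPerm a) _ (mem_listPerm b) (listPerm_lt2.mp h)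

@[simp] theorem mkEmbAbs_f {l : List ℕ} {W : Perm2} {E : ℕ → W.A} {h1 h2} (a) :
    (mkEmbAbs l W E h1 h2).f a = E a.val := rfl

-- Y-elements
def yy1 : YP.A := ⟨⟨1, by decide⟩, Or.inl rfl⟩
def yy3 : YP.A := ⟨⟨3, by decide⟩, Or.inr (Or.inl rfl)⟩
def yy4 : YP.A := ⟨⟨4, by decide⟩, Or.inr (Or.inr rfl)⟩

-- X-elements
def xx1 : XP.A := ⟨1, by decide⟩
def xx2 : XP.A := ⟨2, by decide⟩
def xx3 : XP.A := ⟨3, by decide⟩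
def xx4 : XP.A := ⟨4, by decide⟩

/-! ### Relation 1 -/

noncomputable def amalg1 : Amalg iY j1 where
  Z := listPerm [0,1,3,4,2]
  i' := i1'
  j' := j1'
  comm := fun _ => rfl
  cover := by decide

-- elements of [0,1,3,4]
def w0 : (listPerm [0,1,3,4]).A := ⟨0, by decide⟩
def w1 : (listPerm [0,1,3,4]).A := ⟨1, by decide⟩

noncomputable def E1 (A : Amalg iY j1) : ℕ → A.Z.A := fun v =>
  match v with
  | 0 => A.i'.f w0
  | 1 => A.j'.f xx1
  | 3 => A.j'.f xx3
  | 4 => A.j'.f xx4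
  | _ => A.j'.f xx2

theorem classify1 (A : Amalg iY j1) : ∃! α : Fin 1, AmalgIso ((fun _ => amalg1) α) A := by
  have hc1 : A.i'.f w1 = A.j'.f xx1 := A.comm yy1
  have hc3 : A.i'.f ⟨3, by decide⟩ = A.j'.f xx3 := A.comm yy3
  have hc4 : A.i'.f ⟨4, by decide⟩ = A.j'.f xx4 := A.comm yy4
  -- ord1 chain: E 0 < E 1 < E 2 < E 3 < E 4
  have q01 : A.Z.lt1 (E1 A 0) (E1 A 1) := by
    have h := A.i'.mono1 w0 w1 (by decide); rw [hc1] at h; exact h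
  have q12 : A.Z.lt1 (E1 A 1) (E1 A 2) := A.j'.mono1 xx1 xx2 (by decide)
  have q23 : A.Z.lt1 (E1 A 2) (E1 A 3) := A.j'.mono1 xx2 xx3 (by decide)
  have q34 : A.Z.lt1 (E1 A 3) (E1 A 4) := A.j'.mono1 xx3 xx4 (by decide)
  have q02 := A.Z.lt1_trans q01 q12
  have q03 := A.Z.lt1_trans q02 q23
  have q04 := A.Z.lt1_trans q03 q34
  have q13 := A.Z.lt1_trans q12 q23
  have q14 := A.Z.lt1_trans q13 q34
  have q24 := A.Z.lt1_trans q23 q34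
  -- ord2 chain: E 0 ≺ E 1 ≺ E 3 ≺ E 4 ≺ E 2
  have r01 : A.Z.lt2 (E1 A 0) (E1 A 1) := by
    have h := A.i'.mono2 w0 w1 (by decide); rw [hc1] at h; exact h
  have r13 : A.Z.lt2 (E1 A 1) (E1 A 3) := A.j'.mono2 xx1 xx3 (by decide)
  have r34 : A.Z.lt2 (E1 A 3) (E1 A 4) := A.j'.mono2 xx3 xx4 (by decide)
  have r42 : A.Z.lt2 (E1 A 4) (E1 A 2) := A.j'.mono2 xx4 xx2 (by decide)
  have r03 := A.Z.lt2_trans r01 r13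
  have r04 := A.Z.lt2_trans r03 r34
  have r02 := A.Z.lt2_trans r04 r42
  have r14 := A.Z.lt2_trans r13 r34
  have r12 := A.Z.lt2_trans r14 r42
  have r32 := A.Z.lt2_trans r34 r42
  refine ⟨0, ⟨mkEmbAbs _ _ (E1 A) ?_ ?_, ?_, ?_, ?_⟩, fun β _ => Fin.ext (by omega)⟩
  · intro a ha b hb hab
    fin_cases ha <;> fin_cases hb <;>
      first
        | exact absurd hab (by decide)
        | exact q01 | exact q02 | exact q03 | exact q04 | exact q12
        | exact q13 | exact q14 | exact q23 | exact q24 | exact q34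
  · intro a ha b hb hab
    fin_cases ha <;> fin_cases hb <;>
      first
        | exact absurd hab (by decide)
        | exact r01 | exact r02 | exact r03 | exact r04 | exact r12
        | exact r13 | exact r14 | exact r32 | exact r34 | exact r42
  · -- surjective
    intro z
    rcases A.cover z with ⟨a, ha⟩ | ⟨b, hb⟩
    · fin_cases a
      · exact ⟨⟨0, by decide⟩, by exact ha⟩
      · exact ⟨⟨1, by decide⟩, by exact hc1.symm.trans ha⟩
      · exact ⟨⟨3, by decide⟩, by exact hc3.symm.trans ha⟩
      · exact ⟨⟨4, by decide⟩, by exact hc4.symm.trans ha⟩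
    · fin_cases b
      · exact ⟨⟨1, by decide⟩, by exact hb⟩
      · exact ⟨⟨3, by decide⟩, by exact hb⟩
      · exact ⟨⟨4, by decide⟩, by exact hb⟩
      · exact ⟨⟨2, by decide⟩, by exact hb⟩
  · -- commutes with i'
    intro a
    fin_cases a
    · exact rfl
    · exact hc1.symm
    · exact hc3.symm
    · exact hc4.symm
  · -- commutes with j'
    intro b
    fin_cases b <;> exact rfl

/-! ### Relation 3 -/

noncomputable def amalg3 : Amalg iY j3 where
  Z := listPerm [10,30,35,40,20]
  i' := i3'
  j' := j3'
  comm := fun _ => rfl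
  cover := by decide

def v10 : (listPerm [10,30,35,40]).A := ⟨10, by decide⟩
def v30 : (listPerm [10,30,35,40]).A := ⟨30, by decide⟩
def v35 : (listPerm [10,30,35,40]).A := ⟨35, by decide⟩
def v40 : (listPerm [10,30,35,40]).A := ⟨40, by decide⟩

noncomputable def E3 (A : Amalg iY j3) : ℕ → A.Z.A := fun v =>
  match v with
  | 10 => A.j'.f xx1
  | 30 => A.j'.f xx3
  | 35 => A.i'.f v35
  | 40 => A.j'.f xx4
  | _ => A.j'.f xx2

theorem classify3 (A : Amalg iY j3) : ∃! α : Fin 1, AmalgIso ((fun _ => amalg3) α) A := by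
  have hc1 : A.i'.f v10 = A.j'.f xx1 := A.comm yy1
  have hc3 : A.i'.f v30 = A.j'.f xx3 := A.comm yy3
  have hc4 : A.i'.f v40 = A.j'.f xx4 := A.comm yy4
  -- ord1 chain: E 10 < E 20 < E 30 < E 35 < E 40
  have qa : A.Z.lt1 (E3 A 10) (E3 A 20) := A.j'.mono1 xx1 xx2 (by decide)
  have qb : A.Z.lt1 (E3 A 20) (E3 A 30) := A.j'.mono1 xx2 xx3 (by decide)
  have qc : A.Z.lt1 (E3 A 30) (E3 A 35) := by
    have h := A.i'.mono1 v30 v35 (by decide); rw [hc3] at h; exact h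
  have qd : A.Z.lt1 (E3 A 35) (E3 A 40) := by
    have h := A.i'.mono1 v35 v40 (by decide); rw [hc4] at h; exact h
  have qab := A.Z.lt1_trans qa qb
  have qabc := A.Z.lt1_trans qab qc
  have qabcd := A.Z.lt1_trans qabc qd
  have qbc := A.Z.lt1_trans qb qc
  have qbcd := A.Z.lt1_trans qbc qd
  have qcd := A.Z.lt1_trans qc qd
  -- ord2 chain: E 10 ≺ E 30 ≺ E 35 ≺ E 40 ≺ E 20
  have ra : A.Z.lt2 (E3 A 10) (E3 A 30) := A.j'.mono2 xx1 xx3 (by decide)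
  have rb : A.Z.lt2 (E3 A 30) (E3 A 35) := by
    have h := A.i'.mono2 v30 v35 (by decide); rw [hc3] at h; exact h
  have rc : A.Z.lt2 (E3 A 35) (E3 A 40) := by
    have h := A.i'.mono2 v35 v40 (by decide); rw [hc4] at h; exact h
  have rd : A.Z.lt2 (E3 A 40) (E3 A 20) := A.j'.mono2 xx4 xx2 (by decide)
  have rab := A.Z.lt2_trans ra rb
  have rabc := A.Z.lt2_trans rab rc
  have rabcd := A.Z.lt2_trans rabc rd
  have rbc := A.Z.lt2_trans rb rc
  have rbcd := A.Z.lt2_trans rbc rd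
  have rcd := A.Z.lt2_trans rc rd
  refine ⟨0, ⟨mkEmbAbs _ _ (E3 A) ?_ ?_, ?_, ?_, ?_⟩, fun β _ => Fin.ext (by omega)⟩
  · intro a ha b hb hab
    fin_cases ha <;> fin_cases hb <;>
      first
        | exact absurd hab (by decide)
        | exact qa | exact qb | exact qc | exact qd | exact qab
        | exact qabc | exact qabcd | exact qbc | exact qbcd | exact qcd
  · intro a ha b hb hab
    fin_cases ha <;> fin_cases hb <;>
      first
        | exact absurd hab (by decide)
        | exact ra | exact rb | exact rc | exact rd | exact rab
        | exact rabc | exact rabcd | exact rbc | exact rbcd | exact rcd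
  · -- surjective
    intro z
    rcases A.cover z with ⟨a, ha⟩ | ⟨b, hb⟩
    · fin_cases a
      · exact ⟨⟨10, by decide⟩, by exact hc1.symm.trans ha⟩
      · exact ⟨⟨30, by decide⟩, by exact hc3.symm.trans ha⟩
      · exact ⟨⟨35, by decide⟩, by exact ha⟩
      · exact ⟨⟨40, by decide⟩, by exact hc4.symm.trans ha⟩
    · fin_cases b
      · exact ⟨⟨10, by decide⟩, by exact hb⟩
      · exact ⟨⟨30, by decide⟩, by exact hb⟩
      · exact ⟨⟨40, by decide⟩, by exact hb⟩
      · exact ⟨⟨20, by decide⟩, by exact hb⟩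
  · -- commutes with i'
    intro a
    fin_cases a
    · exact hc1.symm
    · exact hc3.symm
    · exact rfl
    · exact hc4.symm
  · -- commutes with j'
    intro b
    fin_cases b <;> exact rfl

/-! ### Relation 2 -/

noncomputable def amalg2a : Amalg iY j2 where
  Z := listPerm [10,20,30,40,15]
  i' := i2a'
  j' := j2a'
  comm := by
    intro a
    apply Subtype.ext
    show (10 * a.val.val : ℕ) = if a.val.val = 2 then 15 else 10 * a.val.val
    rcases mem_SY a with h | h | h <;> rw [h] <;> norm_num
  cover := by decide

noncomputable def amalg2b : Amalg iY j2 where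
  Z := listPerm [10,20,30,40,25]
  i' := i2b'
  j' := j2b'
  comm := by
    intro a
    apply Subtype.ext
    show (10 * a.val.val : ℕ) = if a.val.val = 2 then 25 else 10 * a.val.val
    rcases mem_SY a with h | h | h <;> rw [h] <;> norm_num
  cover := by decide

noncomputable def r2 : Fin 2 → Amalg iY j2 := fun α => if α.val = 0 then amalg2a else amalg2b

def u10 : (listPerm [10,20,30,40]).A := ⟨10, by decide⟩
def u20 : (listPerm [10,20,30,40]).A := ⟨20, by decide⟩
def u30 : (listPerm [10,20,30,40]).A := ⟨30, by decide⟩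
def u40 : (listPerm [10,20,30,40]).A := ⟨40, by decide⟩

noncomputable def E2 (A : Amalg iY j2) : ℕ → A.Z.A := fun v =>
  match v with
  | 10 => A.j'.f xx1
  | 20 => A.i'.f u20
  | 30 => A.j'.f xx3
  | 40 => A.j'.f xx4
  | _ => A.j'.f xx2

def ta15 : (listPerm [10,20,30,40,15]).A := ⟨15, by decide⟩
def ta20 : (listPerm [10,20,30,40,15]).A := ⟨20, by decide⟩
def tb20 : (listPerm [10,20,30,40,25]).A := ⟨20, by decide⟩
def tb25 : (listPerm [10,20,30,40,25]).A := ⟨25, by decide⟩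

theorem classify2 (A : Amalg iY j2) : ∃! α : Fin 2, AmalgIso (r2 α) A := by
  have hc1 : A.i'.f u10 = A.j'.f xx1 := A.comm yy1
  have hc3 : A.i'.f u30 = A.j'.f xx3 := A.comm yy3
  have hc4 : A.i'.f u40 = A.j'.f xx4 := A.comm yy4
  -- facts independent of the case split
  have q12 : A.Z.lt1 (A.j'.f xx1) (A.i'.f u20) := by
    have h := A.i'.mono1 u10 u20 (by decide); rw [hc1] at h; exact h
  have q23 : A.Z.lt1 (A.i'.f u20) (A.j'.f xx3) := by
    have h := A.i'.mono1 u20 u30 (by decide); rw [hc3] at h; exact h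
  have s12 : A.Z.lt2 (A.j'.f xx1) (A.i'.f u20) := by
    have h := A.i'.mono2 u10 u20 (by decide); rw [hc1] at h; exact h
  have s23 : A.Z.lt2 (A.i'.f u20) (A.j'.f xx3) := by
    have h := A.i'.mono2 u20 u30 (by decide); rw [hc3] at h; exact h
  have s2x : A.Z.lt2 (A.i'.f u20) (A.j'.f xx2) :=
    A.Z.lt2_trans s23 (A.j'.mono2 xx3 xx2 (by decide))
  rcases A.Z.lt1_tricho (A.j'.f xx2) (A.i'.f u20) with hlt | heq | hgt
  · -- case: the new point of X is below the new point of Y' : amalgamation `amalg2a`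
    refine ⟨0, ⟨mkEmbAbs [10,20,30,40,15] _ (E2 A) ?_ ?_, ?_, ?_, ?_⟩, ?_⟩
    · -- ord1 chain: E 10 < E 15 < E 20 < E 30 < E 40
      have qa : A.Z.lt1 (E2 A 10) (E2 A 15) := A.j'.mono1 xx1 xx2 (by decide)
      have qb : A.Z.lt1 (E2 A 15) (E2 A 20) := hlt
      have qc : A.Z.lt1 (E2 A 20) (E2 A 30) := q23
      have qd : A.Z.lt1 (E2 A 30) (E2 A 40) := A.j'.mono1 xx3 xx4 (by decide)
      have qab := A.Z.lt1_trans qa qb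
      have qabc := A.Z.lt1_trans qab qc
      have qabcd := A.Z.lt1_trans qabc qd
      have qbc := A.Z.lt1_trans qb qc
      have qbcd := A.Z.lt1_trans qbc qd
      have qcd := A.Z.lt1_trans qc qd
      intro a ha b hb hab
      fin_cases ha <;> fin_cases hb <;>
        first
          | exact absurd hab (by decide)
          | exact qa | exact qb | exact qc | exact qd | exact qab
          | exact qabc | exact qabcd | exact qbc | exact qbcd | exact qcd
    · -- ord2 chain: E 10 ≺ E 20 ≺ E 30 ≺ E 40 ≺ E 15
      have ra : A.Z.lt2 (E2 A 10) (E2 A 20) := s12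
      have rb : A.Z.lt2 (E2 A 20) (E2 A 30) := s23
      have rc : A.Z.lt2 (E2 A 30) (E2 A 40) := A.j'.mono2 xx3 xx4 (by decide)
      have rd : A.Z.lt2 (E2 A 40) (E2 A 15) := A.j'.mono2 xx4 xx2 (by decide)
      have rab := A.Z.lt2_trans ra rb
      have rabc := A.Z.lt2_trans rab rc
      have rabcd := A.Z.lt2_trans rabc rd
      have rbc := A.Z.lt2_trans rb rc
      have rbcd := A.Z.lt2_trans rbc rd
      have rcd := A.Z.lt2_trans rc rd
      intro a ha b hb hab
      fin_cases ha <;> fin_cases hb <;>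
        first
          | exact absurd hab (by decide)
          | exact ra | exact rb | exact rc | exact rd | exact rab
          | exact rabc | exact rabcd | exact rbc | exact rbcd | exact rcd
    · -- surjective
      intro z
      rcases A.cover z with ⟨a, ha⟩ | ⟨b, hb⟩
      · fin_cases a
        · exact ⟨⟨10, by decide⟩, by exact hc1.symm.trans ha⟩
        · exact ⟨⟨20, by decide⟩, by exact ha⟩
        · exact ⟨⟨30, by decide⟩, by exact hc3.symm.trans ha⟩
        · exact ⟨⟨40, by decide⟩, by exact hc4.symm.trans ha⟩
      · fin_cases b
        · exact ⟨⟨10, by decide⟩, by exact hb⟩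
        · exact ⟨⟨30, by decide⟩, by exact hb⟩
        · exact ⟨⟨40, by decide⟩, by exact hb⟩
        · exact ⟨⟨15, by decide⟩, by exact hb⟩
    · -- commutes with i'
      intro a
      fin_cases a
      · exact hc1.symm
      · exact rfl
      · exact hc3.symm
      · exact hc4.symm
    · -- commutes with j'
      intro b
      fin_cases b <;> exact rfl
    · -- uniqueness
      intro β hβ
      have hβ01 : β = 0 ∨ β = 1 := by omega
      rcases hβ01 with rfl | rfl
      · rfl
      · exfalso
        obtain ⟨e, hsurj, hci, hcj⟩ := hβ
        have h20 : e.f tb20 = A.i'.f u20 := hci u20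
        have h25 : e.f tb25 = A.j'.f xx2 := hcj xx2
        have hm := e.mono1 tb20 tb25 (show (listPerm [10,20,30,40,25]).lt1 tb20 tb25 by decide)
        rw [h20, h25] at hm
        exact A.Z.lt1_irrefl (A.Z.lt1_trans hm hlt)
  · -- impossible case: the two new points coincide
    exfalso
    rw [heq] at s2x
    exact A.Z.lt2_irrefl s2x
  · -- case: the new point of X is above the new point of Y' : amalgamation `amalg2b`
    refine ⟨1, ⟨mkEmbAbs [10,20,30,40,25] _ (E2 A) ?_ ?_, ?_, ?_, ?_⟩, ?_⟩
    · -- ord1 chain: E 10 < E 20 < E 25 < E 30 < E 40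
      have qa : A.Z.lt1 (E2 A 10) (E2 A 20) := q12
      have qb : A.Z.lt1 (E2 A 20) (E2 A 25) := hgt
      have qc : A.Z.lt1 (E2 A 25) (E2 A 30) := A.j'.mono1 xx2 xx3 (by decide)
      have qd : A.Z.lt1 (E2 A 30) (E2 A 40) := A.j'.mono1 xx3 xx4 (by decide)
      have qab := A.Z.lt1_trans qa qb
      have qabc := A.Z.lt1_trans qab qc
      have qabcd := A.Z.lt1_trans qabc qd
      have qbc := A.Z.lt1_trans qb qc
      have qbcd := A.Z.lt1_trans qbc qd
      have qcd := A.Z.lt1_trans qc qd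
      intro a ha b hb hab
      fin_cases ha <;> fin_cases hb <;>
        first
          | exact absurd hab (by decide)
          | exact qa | exact qb | exact qc | exact qd | exact qab
          | exact qabc | exact qabcd | exact qbc | exact qbcd | exact qcd
    · -- ord2 chain: E 10 ≺ E 20 ≺ E 30 ≺ E 40 ≺ E 25
      have ra : A.Z.lt2 (E2 A 10) (E2 A 20) := s12
      have rb : A.Z.lt2 (E2 A 20) (E2 A 30) := s23
      have rc : A.Z.lt2 (E2 A 30) (E2 A 40) := A.j'.mono2 xx3 xx4 (by decide)
      have rd : A.Z.lt2 (E2 A 40) (E2 A 25) := A.j'.mono2 xx4 xx2 (by decide)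
      have rab := A.Z.lt2_trans ra rb
      have rabc := A.Z.lt2_trans rab rc
      have rabcd := A.Z.lt2_trans rabc rd
      have rbc := A.Z.lt2_trans rb rc
      have rbcd := A.Z.lt2_trans rbc rd
      have rcd := A.Z.lt2_trans rc rd
      intro a ha b hb hab
      fin_cases ha <;> fin_cases hb <;>
        first
          | exact absurd hab (by decide)
          | exact ra | exact rb | exact rc | exact rd | exact rab
          | exact rabc | exact rabcd | exact rbc | exact rbcd | exact rcd
    · -- surjective
      intro z
      rcases A.cover z with ⟨a, ha⟩ | ⟨b, hb⟩
      · fin_cases a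
        · exact ⟨⟨10, by decide⟩, by exact hc1.symm.trans ha⟩
        · exact ⟨⟨20, by decide⟩, by exact ha⟩
        · exact ⟨⟨30, by decide⟩, by exact hc3.symm.trans ha⟩
        · exact ⟨⟨40, by decide⟩, by exact hc4.symm.trans ha⟩
      · fin_cases b
        · exact ⟨⟨10, by decide⟩, by exact hb⟩
        · exact ⟨⟨30, by decide⟩, by exact hb⟩
        · exact ⟨⟨40, by decide⟩, by exact hb⟩
        · exact ⟨⟨25, by decide⟩, by exact hb⟩
    · -- commutes with i'
      intro a
      fin_cases a
      · exact hc1.symm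
      · exact rfl
      · exact hc3.symm
      · exact hc4.symm
    · -- commutes with j'
      intro b
      fin_cases b <;> exact rfl
    · -- uniqueness
      intro β hβ
      have hβ01 : β = 0 ∨ β = 1 := by omega
      rcases hβ01 with rfl | rfl
      · exfalso
        obtain ⟨e, hsurj, hci, hcj⟩ := hβ
        have h20 : e.f ta20 = A.i'.f u20 := hci u20
        have h15 : e.f ta15 = A.j'.f xx2 := hcj xx2
        have hm := e.mono1 ta15 ta20 (show (listPerm [10,20,30,40,15]).lt1 ta15 ta20 by decide)
        rw [h20, h15] at hm
        exact A.Z.lt1_irrefl (A.Z.lt1_trans hm hgt)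
      · rfl

/-! ### Putting it together -/

theorem measure_vanishes_on_1342' (k : Type) [CommRing k] (m : PMeasure k) :
    m.μ iY = 0 := by
  have h1 : m.μ iY = m.μ i1' := by
    have h := m.amalg_sum iY j1 1 (fun _ => amalg1) classify1
    rwa [Fin.sum_univ_one] at h
  have h3 : m.μ iY = m.μ i3' := by
    have h := m.amalg_sum iY j3 1 (fun _ => amalg3) classify3
    rwa [Fin.sum_univ_one] at h
  have h2 : m.μ iY = m.μ i2a' + m.μ i2b' := by
    have h := m.amalg_sum iY j2 2 r2 classify2
    rw [Fin.sum_univ_two] at h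
    exact h
  have ea : m.μ i2a' = m.μ i3' :=
    m.iso_invariant i2a' i3' ua va (by decide) (by decide) (by decide)
  have eb : m.μ i2b' = m.μ i1' :=
    m.iso_invariant i2b' i1' ub vb (by decide) (by decide) (by decide)
  have key : m.μ iY = m.μ iY + m.μ iY := by
    calc m.μ iY = m.μ i2a' + m.μ i2b' := h2
      _ = m.μ i3' + m.μ i1' := by rw [ea, eb]
      _ = m.μ iY + m.μ iY := by rw [← h3, ← h1]
  exact (left_eq_add.mp key)


/-- Every measure vanishes on the inclusion of the subpermutation on {1,3,4} into the
permutation 1342. -/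
theorem measure_vanishes_on_1342 (k : Type) [CommRing k] (m : PMeasure k) :
    m.μ (subEmb (listPerm [1,3,4,2]) {a | a.val ∈ ({1,3,4} : Set ℕ)}) = 0 := by
  exact measure_vanishes_on_1342' k m
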